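/- Let X = ℝ^d with a norm, let ℚ and ℚ' be Borel probability measures on X with W_∞(ℚ, ℚ') ≤ ε, and let g: X → [0, ∞] be Borel measurable such that the function S_ε(g)(x) = sup_{‖h‖ ≤ ε} g(x + h) is ℚ-measurable. Then ∫ S_ε(g) dℚ ≥ ∫ g dℚ'. -/

import Mathlib

open MeasureTheory Filter Topology
open scoped ENNReal NNReal

/-- If `W_∞(ℚ, ℚ') ≤ ε` (infimum over couplings of the essential supremum of `‖x - y‖`),
then `∫ S_ε(g) dℚ ≥ ∫ g dℚ'`, where `S_ε(g)(x) = sup_{‖h‖ ≤ ε} g (x + h)`. -/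
theorem stmt_10 {E : Type*} [NormedAddCommGroup E] [NormedSpace ℝ E]
    [FiniteDimensional ℝ E] [MeasurableSpace E] [BorelSpace E]
    (Q Q' : Measure E) [IsProbabilityMeasure Q] [IsProbabilityMeasure Q']
    (ε : ℝ) (hε : 0 ≤ ε)
    (hW : (⨅ (γ : Measure (E × E)) (_ : γ.map Prod.fst = Q ∧ γ.map Prod.snd = Q'),
        essSup (fun p : E × E => (‖p.1 - p.2‖₊ : ℝ≥0∞)) γ) ≤ ENNReal.ofReal ε)
    (g : E → ℝ≥0∞) (hg : Measurable g)
    (hS : AEMeasurable (fun x => ⨆ (h : E) (_ : ‖h‖ ≤ ε), g (x + h)) Q) :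
    ∫⁻ x, g x ∂Q' ≤ ∫⁻ x, (⨆ (h : E) (_ : ‖h‖ ≤ ε), g (x + h)) ∂Q := by
  set S : E → ℝ≥0∞ := fun x => ⨆ (h : E) (_ : ‖h‖ ≤ ε), g (x + h) with hSdef
  -- Step 1: tail comparison
  have tail : ∀ s : ℝ≥0∞, Q' {x | s < g x} ≤ Q {x | s < S x} := by
    intro s
    have hmeas : MeasurableSet {x | s < g x} := measurableSet_lt measurable_const hg
    rw [hmeas.measure_eq_iSup_isCompact]
    refine iSup_le fun K => iSup_le fun hKs => iSup_le fun hKc => ?_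
    rcases K.eq_empty_or_nonempty with rfl | hKne
    · simp
    set A : ℕ → Set E := fun n =>
      {x | EMetric.infEdist x K ≤ ENNReal.ofReal ε + ENNReal.ofReal (1 / (n + 1))} with hA
    have hAmeas : ∀ n, MeasurableSet (A n) :=
      fun n => measurableSet_le (EMetric.continuous_infEdist.measurable) measurable_const
    have hQ'K : ∀ n, Q' K ≤ Q (A n) := by
      intro n
      have hpos : (0 : ℝ) < 1 / (n + 1) := by positivity
      have hlt : (⨅ (γ : Measure (E × E)) (_ : γ.map Prod.fst = Q ∧ γ.map Prod.snd = Q'),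
          essSup (fun p : E × E => (‖p.1 - p.2‖₊ : ℝ≥0∞)) γ)
          < ENNReal.ofReal ε + ENNReal.ofReal (1 / (n + 1)) :=
        lt_of_le_of_lt hW
          (ENNReal.lt_add_right ENNReal.ofReal_ne_top (ENNReal.ofReal_pos.mpr hpos).ne')
      rw [iInf_lt_iff] at hlt
      obtain ⟨γ, hlt⟩ := hlt
      rw [iInf_lt_iff] at hlt
      obtain ⟨⟨hγ1, hγ2⟩, hlt⟩ := hlt
      have hae : ∀ᵐ p ∂γ, (‖p.1 - p.2‖₊ : ℝ≥0∞)
          ≤ ENNReal.ofReal ε + ENNReal.ofReal (1 / (n + 1)) :=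
        (ae_le_essSup (f := fun p : E × E => (‖p.1 - p.2‖₊ : ℝ≥0∞)) (μ := γ)).mono fun p hp => hp.trans hlt.le
      have hsub : (Prod.snd ⁻¹' K : Set (E × E)) ≤ᵐ[γ] (Prod.fst ⁻¹' A n) := by
        filter_upwards [hae] with p hp hpK
        have h1 : EMetric.infEdist p.1 K ≤ edist p.1 p.2 :=
          EMetric.infEdist_le_edist_of_mem hpK
        have h2 : edist p.1 p.2 = (‖p.1 - p.2‖₊ : ℝ≥0∞) := edist_eq_enorm_sub _ _
        exact le_trans (h1.trans_eq h2) hp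
      calc Q' K = γ (Prod.snd ⁻¹' K) := by
            rw [← hγ2, Measure.map_apply measurable_snd hKc.isClosed.measurableSet]
        _ ≤ γ (Prod.fst ⁻¹' A n) := measure_mono_ae hsub
        _ = Q (A n) := by rw [← hγ1, Measure.map_apply measurable_fst (hAmeas n)]
    have hAnti : Antitone A := by
      intro n m hnm x hx
      refine le_trans hx (add_le_add_right (ENNReal.ofReal_le_ofReal ?_) _)
      exact one_div_le_one_div_of_le (by positivity) (by exact_mod_cast by linarith)
    have hInter : (⋂ n, A n) ⊆ {x | s < S x} := by
      intro x hx
      have hxle : EMetric.infEdist x K ≤ ENNReal.ofReal ε := by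
        refine ENNReal.le_of_forall_pos_le_add fun η hη _ => ?_
        obtain ⟨n, hn⟩ := exists_nat_one_div_lt (show (0 : ℝ) < η from hη)
        have hxn := Set.mem_iInter.mp hx n
        refine le_trans hxn (add_le_add_right ?_ _)
        calc ENNReal.ofReal (1 / (n + 1)) ≤ ENNReal.ofReal (η : ℝ) :=
              ENNReal.ofReal_le_ofReal hn.le
          _ = (η : ℝ≥0∞) := ENNReal.ofReal_coe_nnreal
      have hdist : Metric.infDist x K ≤ ε := ENNReal.toReal_le_of_le_ofReal hε hxle
      obtain ⟨y, hyK, hy⟩ := hKc.exists_infDist_eq_dist hKne x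
      have hny : ‖y - x‖ ≤ ε := by
        rw [← dist_eq_norm, dist_comm]
        exact hy ▸ hdist
      have : g (x + (y - x)) ≤ S x := le_iSup₂ (f := fun h (_ : ‖h‖ ≤ ε) => g (x + h)) (y - x) hny
      rw [add_sub_cancel] at this
      exact lt_of_lt_of_le (hKs hyK) this
    calc Q' K ≤ ⨅ n, Q (A n) := le_iInf hQ'K
      _ = Q (⋂ n, A n) :=
          (hAnti.measure_iInter (fun n => (hAmeas n).nullMeasurableSet)
            ⟨0, measure_ne_top Q _⟩).symm
      _ ≤ Q {x | s < S x} := measure_mono hInter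
  -- Step 2: truncation + layer cake
  have htrunc : ∀ a : ℝ≥0∞, (⨆ n : ℕ, min a n) = a := by
    intro a
    apply le_antisymm (iSup_le fun n => min_le_left _ _)
    rcases eq_or_ne a ⊤ with rfl | ha
    · have : (⨆ n : ℕ, min (⊤ : ℝ≥0∞) n) = ⨆ n : ℕ, (n : ℝ≥0∞) := by
        simp [min_def]
      rw [this, ENNReal.iSup_natCast]
    · obtain ⟨n, hn⟩ := ENNReal.exists_nat_gt ha
      exact le_iSup_of_le n (by simp [min_eq_left hn.le])
  have hgQ' : ∫⁻ x, g x ∂Q' = ⨆ n : ℕ, ∫⁻ x, min (g x) n ∂Q' := by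
    rw [← lintegral_iSup (fun n => hg.min measurable_const)
      (fun n m hnm x => min_le_min le_rfl (by exact_mod_cast hnm))]
    simp_rw [htrunc]
  rw [hgQ']
  refine iSup_le fun N => ?_
  -- compare truncated integrals via layer cake
  have hgN_ne : ∀ x, min (g x) (N : ℝ≥0∞) ≠ ⊤ :=
    fun x => ne_top_of_le_ne_top (ENNReal.natCast_ne_top N) (min_le_right _ _)
  have hSN_ne : ∀ x, min (S x) (N : ℝ≥0∞) ≠ ⊤ :=
    fun x => ne_top_of_le_ne_top (ENNReal.natCast_ne_top N) (min_le_right _ _)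
  have e1 : ∫⁻ x, min (g x) N ∂Q'
      = ∫⁻ x, ENNReal.ofReal ((min (g x) N).toReal) ∂Q' := by
    refine lintegral_congr fun x => ?_
    rw [ENNReal.ofReal_toReal (hgN_ne x)]
  have e2 : ∫⁻ x, min (S x) N ∂Q
      = ∫⁻ x, ENNReal.ofReal ((min (S x) N).toReal) ∂Q := by
    refine lintegral_congr fun x => ?_
    rw [ENNReal.ofReal_toReal (hSN_ne x)]
  have mg : AEMeasurable (fun x => (min (g x) (N : ℝ≥0∞)).toReal) Q' :=
    ((hg.min measurable_const).ennreal_toReal).aemeasurable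
  have mS : AEMeasurable (fun x => (min (S x) (N : ℝ≥0∞)).toReal) Q :=
    ENNReal.measurable_toReal.comp_aemeasurable (hS.min aemeasurable_const)
  have key : ∫⁻ x, min (g x) N ∂Q' ≤ ∫⁻ x, min (S x) N ∂Q := by
    rw [e1, e2,
      lintegral_eq_lintegral_meas_lt Q' (Eventually.of_forall fun x => ENNReal.toReal_nonneg) mg,
      lintegral_eq_lintegral_meas_lt Q (Eventually.of_forall fun x => ENNReal.toReal_nonneg) mS]
    refine lintegral_mono fun t => ?_
    by_cases ht : (0 : ℝ) ≤ t
    · by_cases htN : ENNReal.ofReal t < (N : ℝ≥0∞)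
      · have hset1 : {a : E | t < (min (g a) (N : ℝ≥0∞)).toReal}
            = {a : E | ENNReal.ofReal t < g a} := by
          ext a
          simp only [Set.mem_setOf_eq,
            ← ENNReal.ofReal_lt_iff_lt_toReal ht (hgN_ne a), lt_min_iff]
          exact ⟨fun h => h.1, fun h => ⟨h, htN⟩⟩
        have hset2 : {a : E | t < (min (S a) (N : ℝ≥0∞)).toReal}
            = {a : E | ENNReal.ofReal t < S a} := by
          ext a
          simp only [Set.mem_setOf_eq,
            ← ENNReal.ofReal_lt_iff_lt_toReal ht (hSN_ne a), lt_min_iff]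
          exact ⟨fun h => h.1, fun h => ⟨h, htN⟩⟩
        rw [hset1, hset2]
        exact tail (ENNReal.ofReal t)
      · have hset1 : {a : E | t < (min (g a) (N : ℝ≥0∞)).toReal} = (∅ : Set E) := by
          ext a
          simp only [Set.mem_setOf_eq, Set.mem_empty_iff_false, iff_false, not_lt]
          by_contra hcon
          push_neg at hcon
          exact htN (lt_of_lt_of_le
            ((ENNReal.ofReal_lt_iff_lt_toReal ht (hgN_ne a)).mpr hcon) (min_le_right _ _))
        rw [hset1]
        simp
    · push_neg at ht
      have hset1 : {a : E | t < (min (g a) (N : ℝ≥0∞)).toReal} = Set.univ := by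
        ext a
        simpa using lt_of_lt_of_le ht ENNReal.toReal_nonneg
      have hset2 : {a : E | t < (min (S a) (N : ℝ≥0∞)).toReal} = Set.univ := by
        ext a
        simpa using lt_of_lt_of_le ht ENNReal.toReal_nonneg
      rw [hset1, hset2]
      simp
  exact key.trans (lintegral_mono fun x => min_le_left _ _)
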